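/- Let ℓ ≥ 1 and a > a_1 ≥ a_2 ≥ … ≥ a_ℓ, and use in every reduced election with t nominees the scoring vector (a, …, a, a_1, a_2, …, a_ℓ) of length t. Let (S, ℱ, k) be a Hitting Set instance with S = {s_1, …, s_n}, ℱ = {F_1, …, F_m}, and 1 ≤ k ≤ n. Construct the election with parties P = {p}, P_w = {w}, P_i = {s_1^i, …, s_n^i} for each i ∈ [k] (s_r^i being the i-th copy of element s_r), and ℓ−1 further singleton parties whose members form the set D; write F_j^i = {s^i : s ∈ F_j}. The 2k+2m+1 voters are: one voter with order [rest] ≻ p ≻ D; for each i ∈ [k] two voters with order [rest] ≻ s_1^i ≻ s_2^i ≻ … ≻ s_n^i ≻ D; and for each j ∈ [m] two voters with order [rest] ≻ w ≻ F_j^1 ≻ F_j^2 ≻ … ≻ F_j^k ≻ D, where each displayed set stands for its elements in some fixed order and [rest] denotes all remaining candidates in an arbitrary order. Then, for every choice of these arbitrary orders, p is a necessary president in this election if and only if (S, ℱ) admits no hitting set of size at most k. -/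

import Mathlib

open scoped Classical

noncomputable section

/-- Candidates: `p`, `w`, a candidate `s_r^i` for each copy `i ∈ [k]` of each element
`r ∈ [n]`, and a set `D` of `ℓ−1` dummies. -/
inductive GCand (n k ℓ : ℕ) where
  | pp : GCand n k ℓ
  | ww : GCand n k ℓ
  | elem : Fin k → Fin n → GCand n k ℓ
  | dum : Fin (ℓ - 1) → GCand n k ℓ
  deriving DecidableEq, Fintype

/-- Voters: one voter `v0`, two voters for each copy `i ∈ [k]`, and two voters for
each set `F_j`; `2k + 2m + 1` voters in total. -/
inductive GVoter (k m : ℕ) where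
  | v0 : GVoter k m
  | wv : Fin k → Bool → GVoter k m
  | vj : Fin m → Bool → GVoter k m
  deriving DecidableEq, Fintype

variable {n k m ℓ : ℕ}

/-- For each voter, the index of the block of candidates a candidate belongs to in
that voter's preference order (blocks are linearly ordered; the order inside a block
is arbitrary).  `F j` is the `j`-th set of the Hitting Set instance. -/
def ggrp (nn kk : ℕ) (F : Fin m → Finset (Fin n)) : GVoter k m → GCand n k ℓ → ℕ
  | .v0, .pp => 1
  | .v0, .dum _ => 2
  | .v0, _ => 0
  | .wv i _, .elem i' r => if i' = i then 1 + r.val else 0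
  | .wv _ _, .dum _ => nn + 1
  | .wv _ _, _ => 0
  | .vj _ _, .ww => 1
  | .vj j _, .elem i r => if r ∈ F j then 2 + i.val else 0
  | .vj _ _, .dum _ => kk + 2
  | .vj _ _, _ => 0

/-- Each candidate is sent to the index of its party. -/
def grep : GCand n k ℓ → Unit ⊕ Unit ⊕ Fin k ⊕ Fin (ℓ - 1)
  | .pp => Sum.inl ()
  | .ww => Sum.inr (Sum.inl ())
  | .elem i _ => Sum.inr (Sum.inr (Sum.inl i))
  | .dum d => Sum.inr (Sum.inr (Sum.inr d))

/-- The parties: `{p}`, `{w}`, `P_i = {s_1^i, …, s_n^i}` for `i ∈ [k]`, and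
singleton dummy parties. -/
def gparties (n k ℓ : ℕ) : Finset (Finset (GCand n k ℓ)) :=
  Finset.univ.image fun c : GCand n k ℓ =>
    Finset.univ.filter fun c' => grep c' = grep c

/-- Score of `c` over the nominee set `C'` for the Veto-like scoring vector
`(a, …, a, a_1, …, a_ℓ)`: a voter ranking `b` nominees below `c` contributes `a`
points if `b ≥ ℓ` and `as b` points otherwise, where `as b = a_{ℓ−b}` (so `as 0`
is the last entry `a_ℓ` and `as (ℓ−1) = a_1`). -/
def vetoScore {C V : Type*} [Fintype V] (ℓ : ℕ) (a : ℤ) (as : ℕ → ℤ)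
    (pref : V → C → C → Prop) (C' : Finset C) (c : C) : ℤ :=
  ∑ v : V,
    (if ℓ ≤ (C'.filter fun c' => pref v c c').card then a
     else as ((C'.filter fun c' => pref v c c').card))

/-- `C'` contains exactly one nominee of each party of `Ps`. -/
def IsNomineeSet {C : Type*} (Ps : Finset (Finset C)) (C' : Finset C) : Prop :=
  ∀ Pt ∈ Ps, (C' ∩ Pt).card = 1

/-- `p` is a winner of every reduced election containing `p`. -/
def NecessaryPresidentVeto {C V : Type*} [Fintype V] (ℓ : ℕ) (a : ℤ) (as : ℕ → ℤ)
    (pref : V → C → C → Prop) (Ps : Finset (Finset C)) (p : C) : Prop :=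
  ∀ C' : Finset C, IsNomineeSet Ps C' → p ∈ C' →
    ∀ c ∈ C', vetoScore ℓ a as pref C' c ≤ vetoScore ℓ a as pref C' p

namespace VetoAux
open Finset

variable {n k m ℓ : ℕ}

/-- The nominee set determined by a choice function `f`. -/
def nomSet (n k ℓ : ℕ) (f : Fin k → Fin n) : Finset (GCand n k ℓ) :=
  insert GCand.pp (insert GCand.ww
    ((Finset.univ.image fun i => GCand.elem i (f i)) ∪ Finset.univ.image GCand.dum))

lemma mem_nomSet {f : Fin k → Fin n} {c : GCand n k ℓ} :
    c ∈ nomSet n k ℓ f ↔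
      c = GCand.pp ∨ c = GCand.ww ∨ (∃ i, c = GCand.elem i (f i)) ∨ ∃ d, c = GCand.dum d := by
  simp [nomSet, eq_comm]

lemma party_pp : (Finset.univ.filter fun c' : GCand n k ℓ => grep c' = grep (GCand.pp : GCand n k ℓ))
    = {GCand.pp} := by
  ext c; cases c <;> simp <;> simp [grep]

lemma party_ww : (Finset.univ.filter fun c' : GCand n k ℓ => grep c' = grep (GCand.ww : GCand n k ℓ))
    = {GCand.ww} := by
  ext c; cases c <;> simp <;> simp [grep]

lemma party_dum (d : Fin (ℓ - 1)) :
    (Finset.univ.filter fun c' : GCand n k ℓ => grep c' = grep (GCand.dum d : GCand n k ℓ))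
    = {GCand.dum d} := by
  ext c; cases c <;> simp <;> simp [grep]

lemma party_elem (i : Fin k) (r : Fin n) :
    (Finset.univ.filter fun c' : GCand n k ℓ => grep c' = grep (GCand.elem i r : GCand n k ℓ))
    = Finset.univ.image (fun r' => GCand.elem i r') := by
  ext c; cases c <;> simp [grep, eq_comm]

end VetoAux

namespace VetoAux
open Finset

variable {n k m ℓ : ℕ}

lemma card_dum_image :
    (Finset.univ.image (GCand.dum : Fin (ℓ-1) → GCand n k ℓ)).card = ℓ - 1 := by
  rw [Finset.card_image_of_injective _ (fun a b h => by injection h)]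
  simp

lemma nomSet_isNominee (f : Fin k → Fin n) :
    IsNomineeSet (gparties n k ℓ) (nomSet n k ℓ f) := by
  intro Pt hPt
  simp only [gparties, Finset.mem_image, Finset.mem_univ, true_and] at hPt
  obtain ⟨c₀, rfl⟩ := hPt
  rw [Finset.card_eq_one]
  cases c₀ with
  | pp =>
    refine ⟨GCand.pp, ?_⟩
    ext c; cases c <;> simp [mem_nomSet] <;> simp [grep]
  | ww =>
    refine ⟨GCand.ww, ?_⟩
    ext c; cases c <;> simp [mem_nomSet] <;> simp [grep]
  | dum d =>
    refine ⟨GCand.dum d, ?_⟩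
    ext c; cases c <;> simp [mem_nomSet] <;> simp [grep]
  | elem i r =>
    refine ⟨GCand.elem i (f i), ?_⟩
    ext c; cases c with
    | elem i' r' =>
      simp only [Finset.mem_inter, mem_nomSet, Finset.mem_filter, Finset.mem_univ, true_and,
        Finset.mem_singleton]
      simp only [grep]
      constructor
      · rintro ⟨h1, h2⟩
        rcases h1 with h | h | ⟨i'', h⟩ | ⟨d, h⟩ <;> simp_all [GCand.elem.injEq]
      · rintro ⟨rfl, rfl⟩
        exact ⟨Or.inr (Or.inr (Or.inl ⟨i, rfl⟩)), rfl⟩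
    | pp => simp [mem_nomSet] <;> simp [grep]
    | ww => simp [mem_nomSet] <;> simp [grep]
    | dum d => simp [mem_nomSet] <;> simp [grep]

lemma exists_nomFun (hn : 0 < n) {C'' : Finset (GCand n k ℓ)}
    (h : IsNomineeSet (gparties n k ℓ) C'') : ∃ f, C'' = nomSet n k ℓ f := by
  have hmem : ∀ c₀ : GCand n k ℓ,
      (Finset.univ.filter fun c' : GCand n k ℓ => grep c' = grep c₀) ∈ gparties n k ℓ :=
    fun c₀ => Finset.mem_image_of_mem _ (Finset.mem_univ c₀)
  have hone : ∀ c₀ : GCand n k ℓ, ∃ x,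
      x ∈ C'' ∧ grep x = grep c₀ ∧ ∀ y ∈ C'', grep y = grep c₀ → y = x := by
    intro c₀
    obtain ⟨x, hx⟩ := Finset.card_eq_one.mp (h _ (hmem c₀))
    have h1 := Finset.eq_singleton_iff_unique_mem.mp hx
    have hx1 := h1.1
    simp only [Finset.mem_inter, Finset.mem_filter, Finset.mem_univ, true_and] at hx1
    refine ⟨x, hx1.1, hx1.2, fun y hy hgy => h1.2 y ?_⟩
    simp only [Finset.mem_inter, Finset.mem_filter, Finset.mem_univ, true_and]
    exact ⟨hy, hgy⟩
  have hpp : GCand.pp ∈ C'' := by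
    obtain ⟨x, hx, hgx, -⟩ := hone GCand.pp
    cases x <;> simp_all [grep]
  have hww : GCand.ww ∈ C'' := by
    obtain ⟨x, hx, hgx, -⟩ := hone GCand.ww
    cases x <;> simp_all [grep]
  have hdum : ∀ d, GCand.dum d ∈ C'' := by
    intro d
    obtain ⟨x, hx, hgx, -⟩ := hone (GCand.dum d)
    cases x <;> simp_all [grep]
  have key : ∀ i : Fin k, ∃ r : Fin n,
      GCand.elem i r ∈ C'' ∧ ∀ r', GCand.elem i r' ∈ C'' → r' = r := by
    intro i
    obtain ⟨x, hx, hgx, huniq⟩ := hone (GCand.elem i ⟨0, hn⟩)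
    cases x with
    | elem i' r =>
      simp only [grep, Sum.inr.injEq, Sum.inl.injEq] at hgx
      subst hgx
      refine ⟨r, hx, fun r' hr' => ?_⟩
      have := huniq (GCand.elem i' r') hr' (by simp [grep])
      injection this
    | pp => simp [grep] at hgx
    | ww => simp [grep] at hgx
    | dum d => simp [grep] at hgx
  choose f hf1 hf2 using key
  refine ⟨f, ?_⟩
  ext c
  rw [mem_nomSet]
  constructor
  · intro hc
    cases c with
    | pp => exact Or.inl rfl
    | ww => exact Or.inr (Or.inl rfl)
    | dum d => exact Or.inr (Or.inr (Or.inr ⟨d, rfl⟩))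
    | elem i r => exact Or.inr (Or.inr (Or.inl ⟨i, by rw [hf2 i r hc]⟩))
  · rintro (rfl | rfl | ⟨i, rfl⟩ | ⟨d, rfl⟩)
    · exact hpp
    · exact hww
    · exact hf1 i
    · exact hdum d

end VetoAux

open VetoAux Finset

/-- for every Veto-like scoring rule `(a, …, a, a_1, …, a_ℓ)` with
`a > a_1 ≥ … ≥ a_ℓ`, in the election constructed from a Hitting Set instance
`(S, ℱ, k)`, the candidate `p` is a necessary president iff the instance admits no
hitting set of size at most `k`. -/
theorem veto_rule_necessary_president_iff_no_hitting_set
    (n m k ℓ : ℕ) (hℓ : 1 ≤ ℓ) (hk : 1 ≤ k) (hkn : k ≤ n)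
    (F : Fin m → Finset (Fin n))
    -- the scoring vector: `a` on all but the last `ℓ` positions, then `a_1 ≥ … ≥ a_ℓ`
    (a : ℤ) (as : ℕ → ℤ)
    (hmono : ∀ i j : ℕ, i ≤ j → j < ℓ → as i ≤ as j)
    (htop : as (ℓ - 1) < a)
    -- the preference orders, consistent with the prescribed blocks
    (pref : GVoter k m → GCand n k ℓ → GCand n k ℓ → Prop)
    (hlin : ∀ v, IsStrictTotalOrder (GCand n k ℓ) (pref v))
    (hord : ∀ v c c', ggrp n k F v c < ggrp n k F v c' → pref v c c') :
    NecessaryPresidentVeto ℓ a as pref (gparties n k ℓ) GCand.pp ↔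
      ¬ ∃ S' : Finset (Fin n), S'.card ≤ k ∧ ∀ j : Fin m, ∃ s ∈ S', s ∈ F j := by
  classical
  have hn : 0 < n := lt_of_lt_of_le hk hkn
  have hMa : as (ℓ - 1) ≤ a := le_of_lt htop
  have hirr : ∀ v (c : GCand n k ℓ), ¬ pref v c c := by
    intro v c
    haveI := hlin v
    exact irrefl_of (pref v) c
  have hasym : ∀ v (c c' : GCand n k ℓ), pref v c c' → ¬ pref v c' c := by
    intro v c c' h h'
    haveI := hlin v
    exact irrefl_of (pref v) c (trans_of (pref v) h h')
  have hgle : ∀ v (c c' : GCand n k ℓ), pref v c c' → ggrp n k F v c ≤ ggrp n k F v c' := by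
    intro v c c' h
    by_contra hlt
    exact hasym v c c' h (hord v c' c (by omega))
  have bLB : ∀ (C' : Finset (GCand n k ℓ)) v c (T : Finset (GCand n k ℓ)), T ⊆ C' →
      (∀ x ∈ T, ggrp n k F v c < ggrp n k F v x) →
      T.card ≤ (C'.filter fun c' => pref v c c').card := by
    intro C' v c T hT hgt
    apply Finset.card_le_card
    intro x hx
    exact Finset.mem_filter.mpr ⟨hT hx, hord v c x (hgt x hx)⟩
  have bUB : ∀ (C' : Finset (GCand n k ℓ)) v c (T : Finset (GCand n k ℓ)),
      (∀ x ∈ C', x ≠ c → ggrp n k F v c ≤ ggrp n k F v x → x ∈ T) →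
      (C'.filter fun c' => pref v c c').card ≤ T.card := by
    intro C' v c T hcov
    apply Finset.card_le_card
    intro x hx
    obtain ⟨hxC, hpx⟩ := Finset.mem_filter.mp hx
    exact hcov x hxC (fun he => hirr v c (he ▸ hpx)) (hgle v c x hpx)
  set Dm : Finset (GCand n k ℓ) := Finset.univ.image GCand.dum with hDm
  have cardDm : Dm.card = ℓ - 1 := card_dum_image
  have hDmsub : ∀ f : Fin k → Fin n, Dm ⊆ nomSet n k ℓ f := by
    intro f x hx
    rw [hDm, Finset.mem_image] at hx
    obtain ⟨d, -, rfl⟩ := hx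
    exact mem_nomSet.mpr (Or.inr (Or.inr (Or.inr ⟨d, rfl⟩)))
  set N := Fintype.card (GVoter k m) with hN
  haveI : Nonempty (GVoter k m) := ⟨GVoter.v0⟩
  have hN1 : 1 ≤ N := Fintype.card_pos
  -- the below-count of pp at voter v0 is exactly ℓ - 1
  have hppv0 : ∀ f : Fin k → Fin n,
      ((nomSet n k ℓ f).filter fun c' => pref GVoter.v0 GCand.pp c').card = ℓ - 1 := by
    intro f
    refine le_antisymm ?_ ?_
    · rw [← cardDm]
      apply bUB
      intro x hx hne hge
      rw [mem_nomSet] at hx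
      rcases hx with rfl | rfl | ⟨i, rfl⟩ | ⟨d, rfl⟩
      · exact absurd rfl hne
      · simp [ggrp] at hge
      · simp [ggrp] at hge
      · simp [hDm]
    · rw [← cardDm]
      apply bLB _ _ _ _ (hDmsub f)
      intro x hx
      rw [hDm, Finset.mem_image] at hx
      obtain ⟨d, -, rfl⟩ := hx
      simp [ggrp]
  -- the below-count of pp at any other voter is at least ℓ
  have hppv : ∀ (f : Fin k → Fin n) v, v ≠ GVoter.v0 →
      ℓ ≤ ((nomSet n k ℓ f).filter fun c' => pref v GCand.pp c').card := by
    intro f v hv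
    cases v with
    | v0 => exact absurd rfl hv
    | wv i b =>
      have hni : GCand.elem i (f i) ∉ Dm := by simp [hDm]
      have hcard : (insert (GCand.elem i (f i)) Dm).card = ℓ := by
        rw [Finset.card_insert_of_notMem hni, cardDm]; omega
      refine le_trans (le_of_eq hcard.symm) (bLB _ _ _ _ ?_ ?_)
      · intro x hx
        rcases Finset.mem_insert.mp hx with rfl | hx
        · exact mem_nomSet.mpr (Or.inr (Or.inr (Or.inl ⟨i, rfl⟩)))
        · exact hDmsub f hx
      · intro x hx
        rcases Finset.mem_insert.mp hx with rfl | hx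
        · simp [ggrp]
        · rw [hDm, Finset.mem_image] at hx
          obtain ⟨d, -, rfl⟩ := hx
          simp [ggrp]
    | vj j b =>
      have hni : GCand.ww ∉ Dm := by simp [hDm]
      have hcard : (insert GCand.ww Dm).card = ℓ := by
        rw [Finset.card_insert_of_notMem hni, cardDm]; omega
      refine le_trans (le_of_eq hcard.symm) (bLB _ _ _ _ ?_ ?_)
      · intro x hx
        rcases Finset.mem_insert.mp hx with rfl | hx
        · exact mem_nomSet.mpr (Or.inr (Or.inl rfl))
        · exact hDmsub f hx
      · intro x hx
        rcases Finset.mem_insert.mp hx with rfl | hx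
        · simp [ggrp]
        · rw [hDm, Finset.mem_image] at hx
          obtain ⟨d, -, rfl⟩ := hx
          simp [ggrp]
  -- score of pp
  have hscpp : ∀ f : Fin k → Fin n, vetoScore ℓ a as pref (nomSet n k ℓ f) GCand.pp
      = as (ℓ - 1) + ((N - 1 : ℕ) : ℤ) * a := by
    intro f
    unfold vetoScore
    rw [← Finset.sum_erase_add _ _ (Finset.mem_univ GVoter.v0)]
    have h1 : ∀ v ∈ Finset.univ.erase GVoter.v0,
        (if ℓ ≤ ((nomSet n k ℓ f).filter fun c' => pref v GCand.pp c').card then a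
         else as (((nomSet n k ℓ f).filter fun c' => pref v GCand.pp c').card)) = a := by
      intro v hv
      rw [if_pos (hppv f v (Finset.ne_of_mem_erase hv))]
    rw [Finset.sum_congr rfl h1, Finset.sum_const,
      Finset.card_erase_of_mem (Finset.mem_univ _), Finset.card_univ, ← hN,
      hppv0 f, if_neg (by omega : ¬ ℓ ≤ ℓ - 1), nsmul_eq_mul]
    ring
  -- key comparison lemma: two bad voters suffice
  have hkey : ∀ (f : Fin k → Fin n) (c : GCand n k ℓ) (v₁ v₂ : GVoter k m), v₁ ≠ v₂ →
      (∀ v ∈ ({v₁, v₂} : Finset (GVoter k m)),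
        ((nomSet n k ℓ f).filter fun c' => pref v c c').card ≤ ℓ - 1) →
      vetoScore ℓ a as pref (nomSet n k ℓ f) c
        ≤ vetoScore ℓ a as pref (nomSet n k ℓ f) GCand.pp := by
    intro f c v₁ v₂ hvne hsmall
    have hterm_le_a : ∀ v : GVoter k m,
        (if ℓ ≤ ((nomSet n k ℓ f).filter fun c' => pref v c c').card then a
         else as (((nomSet n k ℓ f).filter fun c' => pref v c c').card)) ≤ a := by
      intro v
      split_ifs with h
      · exact le_rfl
      · exact le_trans (hmono _ (ℓ-1) (by omega) (by omega)) hMa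
    have hterm_M : ∀ v ∈ ({v₁, v₂} : Finset (GVoter k m)),
        (if ℓ ≤ ((nomSet n k ℓ f).filter fun c' => pref v c c').card then a
         else as (((nomSet n k ℓ f).filter fun c' => pref v c c').card)) ≤ as (ℓ - 1) := by
      intro v hv
      rw [if_neg (by have := hsmall v hv; omega)]
      exact hmono _ _ (hsmall v hv) (by omega)
    rw [hscpp f]
    unfold vetoScore
    rw [← Finset.sum_sdiff (Finset.subset_univ ({v₁, v₂} : Finset (GVoter k m)))]
    have h2 : ∑ v ∈ ({v₁, v₂} : Finset (GVoter k m)),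
        (if ℓ ≤ ((nomSet n k ℓ f).filter fun c' => pref v c c').card then a
         else as (((nomSet n k ℓ f).filter fun c' => pref v c c').card)) ≤ 2 * as (ℓ - 1) := by
      rw [Finset.sum_pair hvne]
      have := hterm_M v₁ (by simp)
      have := hterm_M v₂ (by simp)
      linarith
    have h3 : ∑ v ∈ (Finset.univ \ {v₁, v₂} : Finset (GVoter k m)),
        (if ℓ ≤ ((nomSet n k ℓ f).filter fun c' => pref v c c').card then a
         else as (((nomSet n k ℓ f).filter fun c' => pref v c c').card))
        ≤ ((N - 2 : ℕ) : ℤ) * a := by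
      calc _ ≤ (Finset.univ \ {v₁, v₂} : Finset (GVoter k m)).card • a :=
            Finset.sum_le_card_nsmul _ _ a (fun v _ => hterm_le_a v)
        _ = _ := by
            rw [Finset.card_sdiff_of_subset (Finset.subset_univ _), Finset.card_pair hvne,
              Finset.card_univ, ← hN, nsmul_eq_mul]
    have hN2 : 2 ≤ N := by
      have h := Finset.card_le_card (Finset.subset_univ ({v₁, v₂} : Finset (GVoter k m)))
      rwa [Finset.card_pair hvne, Finset.card_univ, ← hN] at h
    have c1 : ((N - 2 : ℕ) : ℤ) = (N : ℤ) - 2 := by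
      rw [Nat.cast_sub hN2]; norm_num
    have c2 : ((N - 1 : ℕ) : ℤ) = (N : ℤ) - 1 := by
      rw [Nat.cast_sub hN1]; norm_num
    rw [c1] at h3
    rw [c2]
    linarith
  constructor
  · -- necessary president → no hitting set
    intro hNP hex
    obtain ⟨S', hcard, hhit⟩ := hex
    obtain ⟨f, hfhit⟩ : ∃ f : Fin k → Fin n, ∀ j, ∃ i : Fin k, f i ∈ F j := by
      set L := S'.toList with hL
      refine ⟨fun i => L.getD i.val ⟨0, hn⟩, fun j => ?_⟩
      obtain ⟨s, hsS, hsF⟩ := hhit j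
      have hsL : s ∈ L := Finset.mem_toList.mpr hsS
      have hidx : L.idxOf s < L.length := List.idxOf_lt_length_iff.mpr hsL
      have hlen : L.length ≤ k := by rw [hL, Finset.length_toList]; exact hcard
      refine ⟨⟨L.idxOf s, lt_of_lt_of_le hidx hlen⟩, ?_⟩
      show L.getD (L.idxOf s) ⟨0, hn⟩ ∈ F j
      rw [List.getD_eq_getElem _ _ hidx, List.getElem_idxOf hidx]
      exact hsF
    have hppm : GCand.pp ∈ nomSet n k ℓ f := mem_nomSet.mpr (Or.inl rfl)
    have hwwm : GCand.ww ∈ nomSet n k ℓ f := mem_nomSet.mpr (Or.inr (Or.inl rfl))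
    have hle := hNP (nomSet n k ℓ f) (nomSet_isNominee f) hppm GCand.ww hwwm
    have hwwlb : ∀ v : GVoter k m,
        ℓ ≤ ((nomSet n k ℓ f).filter fun c' => pref v GCand.ww c').card := by
      intro v
      cases v with
      | v0 =>
        have hni : GCand.pp ∉ Dm := by simp [hDm]
        have hcard2 : (insert GCand.pp Dm).card = ℓ := by
          rw [Finset.card_insert_of_notMem hni, cardDm]; omega
        refine le_trans (le_of_eq hcard2.symm) (bLB _ _ _ _ ?_ ?_)
        · intro x hx
          rcases Finset.mem_insert.mp hx with rfl | hx
          · exact hppm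
          · exact hDmsub f hx
        · intro x hx
          rcases Finset.mem_insert.mp hx with rfl | hx
          · simp [ggrp]
          · rw [hDm, Finset.mem_image] at hx
            obtain ⟨d, -, rfl⟩ := hx
            simp [ggrp]
      | wv i b =>
        have hni : GCand.elem i (f i) ∉ Dm := by simp [hDm]
        have hcard2 : (insert (GCand.elem i (f i)) Dm).card = ℓ := by
          rw [Finset.card_insert_of_notMem hni, cardDm]; omega
        refine le_trans (le_of_eq hcard2.symm) (bLB _ _ _ _ ?_ ?_)
        · intro x hx
          rcases Finset.mem_insert.mp hx with rfl | hx
          · exact mem_nomSet.mpr (Or.inr (Or.inr (Or.inl ⟨i, rfl⟩)))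
          · exact hDmsub f hx
        · intro x hx
          rcases Finset.mem_insert.mp hx with rfl | hx
          · simp [ggrp]
          · rw [hDm, Finset.mem_image] at hx
            obtain ⟨d, -, rfl⟩ := hx
            simp [ggrp]
      | vj j b =>
        obtain ⟨i0, hi0⟩ := hfhit j
        have hni : GCand.elem i0 (f i0) ∉ Dm := by simp [hDm]
        have hcard2 : (insert (GCand.elem i0 (f i0)) Dm).card = ℓ := by
          rw [Finset.card_insert_of_notMem hni, cardDm]; omega
        refine le_trans (le_of_eq hcard2.symm) (bLB _ _ _ _ ?_ ?_)
        · intro x hx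
          rcases Finset.mem_insert.mp hx with rfl | hx
          · exact mem_nomSet.mpr (Or.inr (Or.inr (Or.inl ⟨i0, rfl⟩)))
          · exact hDmsub f hx
        · intro x hx
          rcases Finset.mem_insert.mp hx with rfl | hx
          · simp only [ggrp, if_pos hi0]
            omega
          · rw [hDm, Finset.mem_image] at hx
            obtain ⟨d, -, rfl⟩ := hx
            simp [ggrp]
    have hlb : (N : ℤ) * a ≤ vetoScore ℓ a as pref (nomSet n k ℓ f) GCand.ww := by
      unfold vetoScore
      have := Finset.card_nsmul_le_sum Finset.univ
        (fun v => if ℓ ≤ ((nomSet n k ℓ f).filter fun c' => pref v GCand.ww c').card then a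
          else as (((nomSet n k ℓ f).filter fun c' => pref v GCand.ww c').card)) a
        (fun v _ => le_of_eq (if_pos (hwwlb v)).symm)
      rwa [Finset.card_univ, ← hN, nsmul_eq_mul] at this
    rw [hscpp f] at hle
    have c2 : ((N - 1 : ℕ) : ℤ) = (N : ℤ) - 1 := by
      rw [Nat.cast_sub hN1]; norm_num
    rw [c2] at hle
    linarith
  · -- no hitting set → necessary president
    intro hno C'' hnomC hppC c hc
    obtain ⟨f, rfl⟩ := exists_nomFun hn hnomC
    have hunhit : ∃ j : Fin m, ∀ i, f i ∉ F j := by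
      by_contra hcon
      push_neg at hcon
      apply hno
      refine ⟨Finset.univ.image f, ?_, ?_⟩
      · calc (Finset.univ.image f).card ≤ (Finset.univ : Finset (Fin k)).card :=
            Finset.card_image_le
          _ = k := by simp
      · intro j
        obtain ⟨i, hi⟩ := hcon j
        exact ⟨f i, Finset.mem_image_of_mem f (Finset.mem_univ i), hi⟩
    obtain ⟨j₀, hj₀⟩ := hunhit
    rw [mem_nomSet] at hc
    rcases hc with rfl | rfl | ⟨i, rfl⟩ | ⟨d, rfl⟩
    · exact le_rfl
    · -- ww
      apply hkey f _ (GVoter.vj j₀ true) (GVoter.vj j₀ false) (by simp)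
      intro v hv
      simp only [Finset.mem_insert, Finset.mem_singleton] at hv
      have hvj : ∃ b, v = GVoter.vj j₀ b := by
        rcases hv with rfl | rfl
        exacts [⟨true, rfl⟩, ⟨false, rfl⟩]
      obtain ⟨b, rfl⟩ := hvj
      rw [← cardDm]
      apply bUB
      intro x hx hne hge
      rw [mem_nomSet] at hx
      rcases hx with rfl | rfl | ⟨i, rfl⟩ | ⟨d, rfl⟩
      · simp [ggrp] at hge
      · exact absurd rfl hne
      · simp [ggrp, hj₀ i] at hge
      · simp [hDm]
    · -- elem i (f i)
      apply hkey f _ (GVoter.wv i true) (GVoter.wv i false) (by simp)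
      intro v hv
      simp only [Finset.mem_insert, Finset.mem_singleton] at hv
      have hvw : ∃ b, v = GVoter.wv i b := by
        rcases hv with rfl | rfl
        exacts [⟨true, rfl⟩, ⟨false, rfl⟩]
      obtain ⟨b, rfl⟩ := hvw
      rw [← cardDm]
      apply bUB
      intro x hx hne hge
      rw [mem_nomSet] at hx
      rcases hx with rfl | rfl | ⟨i', rfl⟩ | ⟨d, rfl⟩
      · simp [ggrp] at hge
      · simp [ggrp] at hge
      · by_cases hii : i' = i
        · subst hii
          exact absurd rfl hne
        · simp [ggrp, hii] at hge
      · simp [hDm]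
    · -- dum d
      apply hkey f _ GVoter.v0 (GVoter.wv ⟨0, hk⟩ true) (by simp)
      intro v hv
      have hstep : ((nomSet n k ℓ f).filter fun c' => pref v (GCand.dum d) c').card
          ≤ (Dm.erase (GCand.dum d)).card := by
        apply bUB
        intro x hx hne hge
        rw [mem_nomSet] at hx
        rcases hx with rfl | rfl | ⟨i', rfl⟩ | ⟨d', rfl⟩
        · exfalso; cases v <;> simp [ggrp] at hge
        · exfalso; cases v <;> simp [ggrp] at hge
        · exfalso
          cases v with
          | v0 => simp [ggrp] at hge
          | wv i2 b2 =>
            have := (f i').isLt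
            simp only [ggrp] at hge
            split_ifs at hge <;> omega
          | vj j2 b2 =>
            have := i'.isLt
            simp only [ggrp] at hge
            split_ifs at hge <;> omega
        · refine Finset.mem_erase.mpr ⟨?_, by simp [hDm]⟩
          intro he
          exact hne (by rw [he])
      have hce : (Dm.erase (GCand.dum d)).card = ℓ - 1 - 1 := by
        rw [Finset.card_erase_of_mem (by simp [hDm]), cardDm]
      omega
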